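/- Let (X, 𝓑, μ) be a σ-finite measure space with a coarse structure 𝓔, S ⊆ X uniform locally finite, E ∈ 𝓔 ∩ (𝓑×𝓑) measurable with μ(E_s) = C > 0 for all s ∈ S, and θ : X×X → ℝ a bounded function supported in S × S with boundary ∂_S θ(s) := Σ_{s'}θ(s',s) − Σ_{s'}θ(s,s'). Define c(x,y) := Σ_{(s₁,s₂)∈S×S} θ(s₁,s₂)·χ_{E_{s₁}×E_{s₂}}(x,y). Then for all x ∈ X, ∂_X c(x) := ∫ c(y,x)dμ(y) − ∫ c(x,y)dμ(y) = C · Σ_{s∈S} (∂_S θ)(s) · χ_{E_s}(x). -/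

import Mathlib

open MeasureTheory

/-- A coarse structure on `X` (Roe). -/
structure CoarseStructure (X : Type*) where
  sets : Set (Set (X × X))
  diag_mem : {p : X × X | p.1 = p.2} ∈ sets
  subset_mem : ∀ E E' : Set (X × X), E' ∈ sets → E ⊆ E' → E ∈ sets
  union_mem : ∀ E₁ E₂ : Set (X × X), E₁ ∈ sets → E₂ ∈ sets → E₁ ∪ E₂ ∈ sets
  comp_mem : ∀ E₁ E₂ : Set (X × X), E₁ ∈ sets → E₂ ∈ sets →
    {p : X × X | ∃ y, (p.1, y) ∈ E₁ ∧ (y, p.2) ∈ E₂} ∈ sets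
  transpose_mem : ∀ E : Set (X × X), E ∈ sets → {p : X × X | (p.2, p.1) ∈ E} ∈ sets

/-- The section `E_x = {y : (x,y) ∈ E}`. -/
def relSec {X : Type*} (E : Set (X × X)) (x : X) : Set X := {y | (x, y) ∈ E}

/-- `S` is uniformly locally finite. -/
def UniformLocallyFinite {X : Type*} (𝓔 : CoarseStructure X) (S : Set X) : Prop :=
  ∀ E ∈ 𝓔.sets, ∃ N : ℕ, ∀ x : X, (relSec E x ∩ S).Finite ∧ (relSec E x ∩ S).ncard ≤ N

/-- The combinatorial boundary of a 1-chain over `S`. -/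
noncomputable def boundaryS {X : Type*} (S : Set X) (θ : X × X → ℝ) (s : X) : ℝ :=
  (∑ᶠ s' ∈ S, θ (s', s)) - ∑ᶠ s' ∈ S, θ (s, s')

/-- The smeared 1-chain `c(x,y) = Σ_{(s₁,s₂) ∈ S×S} θ(s₁,s₂)·χ_{E_{s₁}×E_{s₂}}(x,y)`. -/
noncomputable def smeared {X : Type*} (S : Set X) (E : Set (X × X)) (θ : X × X → ℝ)
    (p : X × X) : ℝ :=
  ∑ᶠ s₁ ∈ S, ∑ᶠ s₂ ∈ S,
    θ (s₁, s₂) * Set.indicator ((relSec E s₁) ×ˢ (relSec E s₂)) (fun _ => (1 : ℝ)) p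

lemma finsum_mem_eq_finset_sum' {α : Type*} (f : α → ℝ) (S : Set α) (t : Finset α)
    (ht : ↑t ⊆ S) (h : ∀ a ∈ S, f a ≠ 0 → a ∈ t) :
    ∑ᶠ i ∈ S, f i = ∑ i ∈ t, f i := by
  have hfin : (S ∩ Function.support f).Finite :=
    t.finite_toSet.subset (fun a ha => h a ha.1 ha.2)
  rw [finsum_mem_eq_sum f hfin]
  apply Finset.sum_subset
  · intro a ha
    rw [Set.Finite.mem_toFinset] at ha
    exact h a ha.1 ha.2
  · intro a hat ha
    rw [Set.Finite.mem_toFinset] at ha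
    by_contra hne
    exact ha ⟨ht hat, hne⟩

lemma ind_prod_apply {X : Type*} (A B : Set X) (x y : X) :
    Set.indicator (A ×ˢ B) (fun _ => (1:ℝ)) (x, y) =
      Set.indicator A (fun _ => (1:ℝ)) x * Set.indicator B (fun _ => (1:ℝ)) y := by
  by_cases hx : x ∈ A <;> by_cases hy : y ∈ B <;>
    simp [Set.indicator_apply, Set.mem_prod, hx, hy]

lemma integral_const_mul_ind {X : Type*} [MeasurableSpace X] (μ : Measure X)
    (B : Set X) (hB : MeasurableSet B) (hBfin : μ B ≠ ⊤) (c : ℝ) :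
    Integrable (fun y => c * Set.indicator B (fun _ => (1:ℝ)) y) μ ∧
    ∫ y, c * Set.indicator B (fun _ => (1:ℝ)) y ∂μ = c * (μ B).toReal := by
  have heq : (fun y => c * Set.indicator B (fun _ => (1:ℝ)) y)
      = Set.indicator B (fun _ => c) := by
    ext y; by_cases h : y ∈ B <;> simp [h]
  constructor
  · rw [heq]
    exact (integrable_indicator_iff hB).2 (integrableOn_const hBfin)
  · rw [heq, integral_indicator_const c hB, smul_eq_mul, mul_comm, measureReal_def]

theorem boundary_of_smeared_chain {X : Type*} [MeasurableSpace X]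
    (μ : Measure X) [SigmaFinite μ] (𝓔 : CoarseStructure X)
    (S : Set X) (hS : UniformLocallyFinite 𝓔 S)
    (E : Set (X × X)) (hE : E ∈ 𝓔.sets) (hEmeas : MeasurableSet E)
    (C : ℝ) (hC : 0 < C) (hconst : ∀ s ∈ S, μ (relSec E s) = ENNReal.ofReal C)
    (θ : X × X → ℝ) (M : ℝ) (hθbd : ∀ p : X × X, |θ p| ≤ M)
    (Eθ : Set (X × X)) (hEθ : Eθ ∈ 𝓔.sets)
    (hsupp : ∀ p : X × X, θ p ≠ 0 → p.1 ∈ S ∧ p.2 ∈ S ∧ p ∈ Eθ) :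
    ∀ x : X,
      (∫ y, smeared S E θ (y, x) ∂μ) - ∫ y, smeared S E θ (x, y) ∂μ =
        C * ∑ᶠ s ∈ S, boundaryS S θ s * Set.indicator (relSec E s) (fun _ => (1 : ℝ)) x := by
  classical
  intro x
  obtain ⟨N₀, hA⟩ := hS _ (𝓔.transpose_mem E hE)
  obtain ⟨N₁, hF⟩ := hS Eθ hEθ
  obtain ⟨N₂, hG⟩ := hS _ (𝓔.transpose_mem Eθ hEθ)
  set Afin : Finset X := (hA x).1.toFinset with hAfin_def
  have hAmem : ∀ s, s ∈ Afin ↔ ((s, x) ∈ E ∧ s ∈ S) := by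
    intro s
    simp [hAfin_def, Set.Finite.mem_toFinset, relSec]
  have hAsub : ↑Afin ⊆ S := fun s hs => ((hAmem s).1 hs).2
  set Ffin : X → Finset X := fun s => (hF s).1.toFinset with hFfin_def
  have hFmem : ∀ s s', s' ∈ Ffin s ↔ ((s, s') ∈ Eθ ∧ s' ∈ S) := by
    intro s s'
    simp [hFfin_def, Set.Finite.mem_toFinset, relSec]
  have hFsub : ∀ s, ↑(Ffin s) ⊆ S := fun s s' hs => ((hFmem s s').1 hs).2
  set Gfin : X → Finset X := fun s => (hG s).1.toFinset with hGfin_def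
  have hGmem : ∀ s s', s' ∈ Gfin s ↔ ((s', s) ∈ Eθ ∧ s' ∈ S) := by
    intro s s'
    simp [hGfin_def, Set.Finite.mem_toFinset, relSec]
  set T : Finset X := Afin.biUnion Gfin with hT_def
  have hTsub : ↑T ⊆ S := by
    intro s hs
    rw [hT_def] at hs
    simp only [Finset.coe_biUnion, Set.mem_iUnion, Finset.mem_coe] at hs
    obtain ⟨s₂, _, hs₂⟩ := hs
    exact ((hGmem s₂ s).1 hs₂).2
  have hsec : ∀ s : X, MeasurableSet (relSec E s) := fun s =>
    measurable_prodMk_left hEmeas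
  have hμfin : ∀ s ∈ S, μ (relSec E s) ≠ ⊤ := by
    intro s hs; rw [hconst s hs]; exact ENNReal.ofReal_ne_top
  have hμC : ∀ s ∈ S, (μ (relSec E s)).toReal = C := by
    intro s hs; rw [hconst s hs, ENNReal.toReal_ofReal hC.le]
  -- pointwise formula for smeared (x, ·)
  have hsm_xy : ∀ y, smeared S E θ (x, y) =
      ∑ s₁ ∈ Afin, ∑ s₂ ∈ Ffin s₁,
        θ (s₁, s₂) * Set.indicator (relSec E s₂) (fun _ => (1:ℝ)) y := by
    intro y
    unfold smeared
    rw [finsum_mem_eq_finset_sum' _ S Afin hAsub]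
    · refine Finset.sum_congr rfl (fun s₁ hs₁ => ?_)
      rw [finsum_mem_eq_finset_sum' _ S (Ffin s₁) (hFsub s₁)]
      · refine Finset.sum_congr rfl (fun s₂ hs₂ => ?_)
        rw [ind_prod_apply,
          Set.indicator_of_mem (show x ∈ relSec E s₁ from ((hAmem s₁).1 hs₁).1),
          one_mul]
      · intro s₂ hs₂ hne
        have hθne : θ (s₁, s₂) ≠ 0 := fun h0 => hne (by rw [h0, zero_mul])
        exact (hFmem s₁ s₂).2 ⟨(hsupp _ hθne).2.2, hs₂⟩
    · intro s₁ hs₁ hne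
      by_contra hnot
      apply hne
      have hx : x ∉ relSec E s₁ := fun hx => hnot ((hAmem s₁).2 ⟨hx, hs₁⟩)
      apply finsum_mem_of_eqOn_zero
      intro s₂ _
      show θ (s₁, s₂) *
        Set.indicator ((relSec E s₁) ×ˢ (relSec E s₂)) (fun _ => (1:ℝ)) (x, y) = 0
      rw [ind_prod_apply, Set.indicator_of_notMem hx, zero_mul, mul_zero]
  have hI_xy : ∫ y, smeared S E θ (x, y) ∂μ =
      ∑ s₁ ∈ Afin, (∑ᶠ s₂ ∈ S, θ (s₁, s₂)) * C := by
    simp only [hsm_xy]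
    rw [integral_finset_sum _ (fun s₁ _ => integrable_finset_sum _ (fun s₂ hs₂ =>
      (integral_const_mul_ind μ _ (hsec s₂) (hμfin s₂ (hFsub s₁ hs₂)) _).1))]
    refine Finset.sum_congr rfl (fun s₁ _ => ?_)
    rw [integral_finset_sum _ (fun s₂ hs₂ =>
        (integral_const_mul_ind μ _ (hsec s₂) (hμfin s₂ (hFsub s₁ hs₂)) _).1),
      finsum_mem_eq_finset_sum' (fun s₂ => θ (s₁, s₂)) S (Ffin s₁) (hFsub s₁)
        (fun s₂ hs₂ hne => (hFmem s₁ s₂).2 ⟨(hsupp _ hne).2.2, hs₂⟩),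
      Finset.sum_mul]
    refine Finset.sum_congr rfl (fun s₂ hs₂ => ?_)
    rw [(integral_const_mul_ind μ _ (hsec s₂) (hμfin s₂ (hFsub s₁ hs₂)) _).2,
      hμC s₂ (hFsub s₁ hs₂)]
  -- pointwise formula for smeared (·, x)
  have hsm_yx : ∀ y, smeared S E θ (y, x) =
      ∑ s₂ ∈ Afin, ∑ s₁ ∈ T,
        θ (s₁, s₂) * Set.indicator (relSec E s₁) (fun _ => (1:ℝ)) y := by
    intro y
    rw [Finset.sum_comm]
    unfold smeared
    rw [finsum_mem_eq_finset_sum' _ S T hTsub]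
    · refine Finset.sum_congr rfl (fun s₁ hs₁ => ?_)
      rw [finsum_mem_eq_finset_sum' _ S Afin hAsub]
      · refine Finset.sum_congr rfl (fun s₂ hs₂ => ?_)
        rw [ind_prod_apply,
          Set.indicator_of_mem (show x ∈ relSec E s₂ from ((hAmem s₂).1 hs₂).1),
          mul_one]
      · intro s₂ hs₂ hne
        have hx : x ∈ relSec E s₂ := by
          by_contra hx
          apply hne
          rw [ind_prod_apply, Set.indicator_of_notMem hx, mul_zero, mul_zero]
        exact (hAmem s₂).2 ⟨hx, hs₂⟩
    · intro s₁ hs₁ hne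
      by_contra hnot
      apply hne
      apply finsum_mem_of_eqOn_zero
      intro s₂ hs₂
      show θ (s₁, s₂) *
        Set.indicator ((relSec E s₁) ×ˢ (relSec E s₂)) (fun _ => (1:ℝ)) (y, x) = 0
      by_cases hθ : θ (s₁, s₂) = 0
      · rw [hθ, zero_mul]
      · by_cases hx : x ∈ relSec E s₂
        · exact absurd (Finset.mem_biUnion.2
            ⟨s₂, (hAmem s₂).2 ⟨hx, hs₂⟩, (hGmem s₂ s₁).2 ⟨(hsupp _ hθ).2.2, hs₁⟩⟩) hnot
        · rw [ind_prod_apply, Set.indicator_of_notMem hx, mul_zero, mul_zero]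
  have hI_yx : ∫ y, smeared S E θ (y, x) ∂μ =
      ∑ s₂ ∈ Afin, (∑ᶠ s₁ ∈ S, θ (s₁, s₂)) * C := by
    simp only [hsm_yx]
    rw [integral_finset_sum _ (fun s₂ _ => integrable_finset_sum _ (fun s₁ hs₁ =>
      (integral_const_mul_ind μ _ (hsec s₁) (hμfin s₁ (hTsub hs₁)) _).1))]
    refine Finset.sum_congr rfl (fun s₂ hs₂ => ?_)
    rw [integral_finset_sum _ (fun s₁ hs₁ =>
        (integral_const_mul_ind μ _ (hsec s₁) (hμfin s₁ (hTsub hs₁)) _).1),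
      finsum_mem_eq_finset_sum' (fun s₁ => θ (s₁, s₂)) S T hTsub
        (fun s₁ hs₁ hne => Finset.mem_biUnion.2
          ⟨s₂, hs₂, (hGmem s₂ s₁).2 ⟨(hsupp _ hne).2.2, hs₁⟩⟩),
      Finset.sum_mul]
    refine Finset.sum_congr rfl (fun s₁ hs₁ => ?_)
    rw [(integral_const_mul_ind μ _ (hsec s₁) (hμfin s₁ (hTsub hs₁)) _).2,
      hμC s₁ (hTsub hs₁)]
  -- the right-hand side
  have hRHS : (∑ᶠ s ∈ S, boundaryS S θ s * Set.indicator (relSec E s) (fun _ => (1:ℝ)) x)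
      = ∑ s ∈ Afin, boundaryS S θ s := by
    rw [finsum_mem_eq_finset_sum' _ S Afin hAsub (fun s hs hne => by
      by_contra hnot
      apply hne
      rw [Set.indicator_of_notMem (show x ∉ relSec E s from fun hx => hnot ((hAmem s).2 ⟨hx, hs⟩)), mul_zero])]
    refine Finset.sum_congr rfl (fun s hs => ?_)
    rw [Set.indicator_of_mem (show x ∈ relSec E s from ((hAmem s).1 hs).1), mul_one]
  rw [hI_yx, hI_xy, hRHS, ← Finset.sum_sub_distrib, Finset.mul_sum]
  refine Finset.sum_congr rfl (fun s _ => ?_)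
  unfold boundaryS
  ring
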